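/- Under Assumptions 1 and 2, the best-case restricted value q^- is a finite real number: the set Ū is nonempty, p(b,c) is finite for every (b,c) ∈ Ū, and inf{p(b,c) : (b,c) ∈ Ū} > −∞. -/

import Mathlib

open Matrix

/-- The perturbed primal feasible set `P(b) = {x : Âx = b̂ + b, x ≥ 0}`. -/
def Pfeas (m n : ℕ) (Ahat : Matrix (Fin m) (Fin n) ℝ) (bhat b : Fin m → ℝ) :
    Set (Fin n → ℝ) :=
  {x | Ahat.mulVec x = bhat + b ∧ 0 ≤ x}

/-- The perturbed dual feasible set `D(c) = {(y,s) : Âᵀy + s = ĉ + c, s ≥ 0}`. -/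
def Dfeas (m n : ℕ) (Ahat : Matrix (Fin m) (Fin n) ℝ) (chat c : Fin n → ℝ) :
    Set ((Fin m → ℝ) × (Fin n → ℝ)) :=
  {ys | Ahat.transpose.mulVec ys.1 + ys.2 = chat + c ∧ 0 ≤ ys.2}

/-- The perturbed optimal value `p(b,c)` as an extended real number
(`sInf ∅ = +∞` in `EReal`). -/
noncomputable def pval (m n : ℕ) (Ahat : Matrix (Fin m) (Fin n) ℝ)
    (bhat b : Fin m → ℝ) (chat c : Fin n → ℝ) : EReal :=
  sInf ((fun x => (((chat + c) ⬝ᵥ x : ℝ) : EReal)) '' Pfeas m n Ahat bhat b)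

/-- The restricted uncertainty set `Ū = {(b,c) ∈ U : P(b) ≠ ∅, D(c) ≠ ∅}`. -/
def Ubar (m n : ℕ) (Ahat : Matrix (Fin m) (Fin n) ℝ) (bhat : Fin m → ℝ)
    (chat : Fin n → ℝ) (U : Set ((Fin m → ℝ) × (Fin n → ℝ))) :
    Set ((Fin m → ℝ) × (Fin n → ℝ)) :=
  {bc ∈ U | (Pfeas m n Ahat bhat bc.1).Nonempty ∧ (Dfeas m n Ahat chat bc.2).Nonempty}

/-- Bound on a dot product in terms of sup norms. -/
lemma dot_lower {ι : Type*} [Fintype ι] (v w : ι → ℝ) :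
    -((Fintype.card ι : ℝ) * ‖v‖ * ‖w‖) ≤ v ⬝ᵥ w := by
  have h : |v ⬝ᵥ w| ≤ (Fintype.card ι : ℝ) * ‖v‖ * ‖w‖ := by
    calc |∑ i, v i * w i| ≤ ∑ i, |v i * w i| := Finset.abs_sum_le_sum_abs _ _
      _ ≤ ∑ _i : ι, ‖v‖ * ‖w‖ := Finset.sum_le_sum (fun i _ => by
          rw [abs_mul]
          exact mul_le_mul (norm_le_pi_norm v i) (norm_le_pi_norm w i) (abs_nonneg _)
            (norm_nonneg _))
      _ = (Fintype.card ι : ℝ) * ‖v‖ * ‖w‖ := by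
          simp [Finset.sum_const, mul_assoc]
  have := neg_abs_le (v ⬝ᵥ w)
  simp only [dotProduct] at *
  linarith

/-- A linear map that vanishes only at `0` on a closed cone is coercive on that cone. -/
lemma coercive {E F : Type*} [NormedAddCommGroup E] [NormedSpace ℝ E]
    [FiniteDimensional ℝ E] [NormedAddCommGroup F] [NormedSpace ℝ F]
    (L : E →ₗ[ℝ] F) (K : Set E) (hK : IsClosed K)
    (hcone : ∀ (t : ℝ) (x : E), 0 ≤ t → x ∈ K → t • x ∈ K)
    (h0 : ∀ x ∈ K, L x = 0 → x = 0) :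
    ∃ δ : ℝ, 0 < δ ∧ ∀ x ∈ K, δ * ‖x‖ ≤ ‖L x‖ := by
  have hLc : Continuous L := L.continuous_of_finiteDimensional
  set S := K ∩ Metric.sphere (0:E) 1 with hSdef
  have key : ∀ δ : ℝ, (∀ u ∈ S, δ ≤ ‖L u‖) → ∀ x ∈ K, δ * ‖x‖ ≤ ‖L x‖ := by
    intro δ hδ x hx
    rcases eq_or_ne x 0 with rfl | hx0
    · simp
    · have hnx : 0 < ‖x‖ := norm_pos_iff.mpr hx0
      have hu : ‖x‖⁻¹ • x ∈ S := by
        refine ⟨hcone _ _ (by positivity) hx, ?_⟩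
        simp [norm_smul, abs_of_pos (inv_pos.mpr hnx), inv_mul_cancel₀ hnx.ne']
      have := hδ _ hu
      rw [L.map_smul, norm_smul, Real.norm_eq_abs, abs_of_pos (inv_pos.mpr hnx)] at this
      calc δ * ‖x‖ ≤ (‖x‖⁻¹ * ‖L x‖) * ‖x‖ := by nlinarith
        _ = ‖L x‖ := by field_simp
  by_cases hne : S.Nonempty
  · have hScomp : IsCompact S := (isCompact_sphere (0:E) 1).inter_left hK
    obtain ⟨x₀, hx₀S, hmin⟩ := hScomp.exists_isMinOn hne hLc.norm.continuousOn
    have hx₀n : ‖x₀‖ = 1 := by simpa using hx₀S.2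
    have hδpos : 0 < ‖L x₀‖ := by
      rcases (norm_nonneg (L x₀)).lt_or_eq with h | h
      · exact h
      · exfalso
        have hz : L x₀ = 0 := by simpa using h.symm
        have := h0 x₀ hx₀S.1 hz
        rw [this] at hx₀n; simp at hx₀n
    exact ⟨‖L x₀‖, hδpos, key _ (fun u hu => hmin hu)⟩
  · exact ⟨1, one_pos, key 1 (fun u hu => absurd ⟨u, hu⟩ hne)⟩

lemma dot_nonneg' {ι : Type*} [Fintype ι] {v w : ι → ℝ} (hv : 0 ≤ v) (hw : 0 ≤ w) :
    0 ≤ v ⬝ᵥ w :=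
  Finset.sum_nonneg fun i _ => mul_nonneg (hv i) (hw i)

/-- Weak duality. -/
lemma weak_dual {m n : ℕ} {Ahat : Matrix (Fin m) (Fin n) ℝ} {bhat b : Fin m → ℝ}
    {chat c : Fin n → ℝ} {x : Fin n → ℝ} {ys : (Fin m → ℝ) × (Fin n → ℝ)}
    (hx : x ∈ Pfeas m n Ahat bhat b) (hys : ys ∈ Dfeas m n Ahat chat c) :
    ys.1 ⬝ᵥ (bhat + b) ≤ (chat + c) ⬝ᵥ x := by
  obtain ⟨hAx, hx0⟩ := hx
  obtain ⟨hAy, hs0⟩ := hys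
  have key : (chat + c) ⬝ᵥ x = ys.1 ⬝ᵥ (bhat + b) + ys.2 ⬝ᵥ x := by
    rw [← hAy, ← hAx, add_dotProduct, Matrix.mulVec_transpose, ← Matrix.dotProduct_mulVec]
  have := dot_nonneg' hs0 hx0
  linarith

theorem q_minus_finite (m n : ℕ)
    (Ahat : Matrix (Fin m) (Fin n) ℝ) (bhat : Fin m → ℝ) (chat : Fin n → ℝ)
    (U : Set ((Fin m → ℝ) × (Fin n → ℝ)))
    (hUcompact : IsCompact U) (hUconvex : Convex ℝ U) (hU0 : (0, 0) ∈ U)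
    (hP0 : (Pfeas m n Ahat bhat 0).Nonempty) (hD0 : (Dfeas m n Ahat chat 0).Nonempty)
    (hbdd : Bornology.IsBounded (Pfeas m n Ahat bhat 0) ∨
      Bornology.IsBounded (Dfeas m n Ahat chat 0)) :
    (Ubar m n Ahat bhat chat U).Nonempty ∧
    (∀ bc ∈ Ubar m n Ahat bhat chat U,
      ∃ v : ℝ, pval m n Ahat bhat bc.1 chat bc.2 = (v : EReal)) ∧
    ⊥ < sInf ((fun bc => pval m n Ahat bhat bc.1 chat bc.2) ''
        Ubar m n Ahat bhat chat U) := by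
  -- a norm bound on the compact uncertainty set
  obtain ⟨C, hC⟩ := hUcompact.isBounded.exists_norm_le
  have hC1 : ∀ bc ∈ U, ‖bc.1‖ ≤ C := fun bc h => (norm_fst_le bc).trans (hC bc h)
  have hC2 : ∀ bc ∈ U, ‖bc.2‖ ≤ C := fun bc h => (norm_snd_le bc).trans (hC bc h)
  have hCnn : 0 ≤ C := (norm_nonneg _).trans (hC _ hU0)
  -- uniform lower bound on all attainable objective values over Ū
  have main : ∃ lo : ℝ, ∀ bc ∈ Ubar m n Ahat bhat chat U,
      ∀ x ∈ Pfeas m n Ahat bhat bc.1, lo ≤ (chat + bc.2) ⬝ᵥ x := by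
    rcases hbdd with hPb | hDb
    · -- P(0) bounded: the primal feasible sets are uniformly bounded
      obtain ⟨x₀, hx₀⟩ := hP0
      obtain ⟨R, hR⟩ := hPb.exists_norm_le
      have hRnn : 0 ≤ R := (norm_nonneg _).trans (hR _ hx₀)
      have h0 : ∀ x ∈ {x : Fin n → ℝ | 0 ≤ x}, Ahat.mulVecLin x = 0 → x = 0 := by
        intro x hxK hAx
        by_contra hne
        have hnx : 0 < ‖x‖ := norm_pos_iff.mpr hne
        set t : ℝ := (R + ‖x₀‖ + 1) / ‖x‖ with ht
        have htnn : 0 ≤ t := div_nonneg (by positivity) hnx.le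
        have hAx' : Ahat.mulVec x = 0 := hAx
        have hmem : x₀ + t • x ∈ Pfeas m n Ahat bhat 0 := by
          constructor
          · rw [Matrix.mulVec_add, Matrix.mulVec_smul, hAx', hx₀.1]
            simp
          · intro i
            have : (0:ℝ) ≤ x₀ i + t * x i :=
              add_nonneg (hx₀.2 i) (mul_nonneg htnn (hxK i))
            simpa using this
        have hRm := hR _ hmem
        have htx : ‖t • x‖ = R + ‖x₀‖ + 1 := by
          rw [norm_smul, Real.norm_eq_abs, abs_of_nonneg htnn, ht,
            div_mul_cancel₀ _ hnx.ne']
        have h2 : ‖t • x‖ ≤ ‖x₀ + t • x‖ + ‖x₀‖ := by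
          calc ‖t • x‖ = ‖x₀ + t • x - x₀‖ := by rw [add_sub_cancel_left]
            _ ≤ ‖x₀ + t • x‖ + ‖x₀‖ := norm_sub_le _ _
        linarith
      obtain ⟨δ, hδpos, hδ⟩ := coercive Ahat.mulVecLin {x : Fin n → ℝ | 0 ≤ x}
        (isClosed_Ici (a := (0 : Fin n → ℝ)))
        (fun t x ht hx => show (0 : Fin n → ℝ) ≤ t • x from fun i => mul_nonneg ht (hx i)) h0
      refine ⟨-((n:ℝ) * (‖chat‖ + C) * ((‖bhat‖ + C) / δ)), ?_⟩
      rintro ⟨b, c⟩ hbc x hx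
      have hxK : x ∈ {x : Fin n → ℝ | 0 ≤ x} := hx.2
      have hAxn : ‖Ahat.mulVecLin x‖ = ‖bhat + b‖ := by
        rw [Matrix.mulVecLin_apply, hx.1]
      have hxb : δ * ‖x‖ ≤ ‖bhat + b‖ := hAxn ▸ hδ x hxK
      have hb : ‖bhat + b‖ ≤ ‖bhat‖ + C :=
        (norm_add_le _ _).trans (by linarith [hC1 _ hbc.1])
      have hxn : ‖x‖ ≤ (‖bhat‖ + C) / δ := by
        rw [le_div_iff₀ hδpos]; nlinarith
      have hcn : ‖chat + c‖ ≤ ‖chat‖ + C :=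
        (norm_add_le _ _).trans (by linarith [hC2 _ hbc.1])
      have hdl := dot_lower (chat + c) x
      rw [Fintype.card_fin] at hdl
      have hmul : ‖chat + c‖ * ‖x‖ ≤ (‖chat‖ + C) * ((‖bhat‖ + C) / δ) :=
        mul_le_mul hcn hxn (norm_nonneg x) (by positivity)
      nlinarith [norm_nonneg (chat + c), norm_nonneg x, Nat.cast_nonneg (α := ℝ) n]
    · -- D(0) bounded: the dual feasible sets are uniformly bounded
      obtain ⟨ys₀, hys₀⟩ := hD0
      obtain ⟨R, hR⟩ := hDb.exists_norm_le
      set L : ((Fin m → ℝ) × (Fin n → ℝ)) →ₗ[ℝ] (Fin n → ℝ) :=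
        (Ahat.transpose.mulVecLin.comp (LinearMap.fst ℝ (Fin m → ℝ) (Fin n → ℝ))) +
          LinearMap.snd ℝ (Fin m → ℝ) (Fin n → ℝ) with hLdef
      have hLapp : ∀ p : (Fin m → ℝ) × (Fin n → ℝ),
          L p = Ahat.transpose.mulVec p.1 + p.2 := by
        intro p
        simp [hLdef, Matrix.mulVecLin_apply, Matrix.mulVec_transpose]
      set K : Set ((Fin m → ℝ) × (Fin n → ℝ)) := {p | 0 ≤ p.2} with hKdef
      have hKclosed : IsClosed K :=
        (isClosed_Ici (a := (0 : Fin n → ℝ))).preimage continuous_snd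
      have hKcone : ∀ (t : ℝ) (p : (Fin m → ℝ) × (Fin n → ℝ)), 0 ≤ t → p ∈ K → t • p ∈ K :=
        by
        intro t p ht hp
        show (0 : Fin n → ℝ) ≤ (t • p).2
        rw [Prod.smul_snd]
        exact smul_nonneg ht hp
      have h0 : ∀ p ∈ K, L p = 0 → p = 0 := by
        intro p hpK hLp
        by_contra hne
        have hnp : 0 < ‖p‖ := norm_pos_iff.mpr hne
        set t : ℝ := (R + ‖ys₀‖ + 1) / ‖p‖ with ht
        have hRnn : 0 ≤ R := (norm_nonneg _).trans (hR _ hys₀)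
        have htnn : 0 ≤ t := div_nonneg (by positivity) hnp.le
        have hLp' : Ahat.transpose.mulVec p.1 + p.2 = 0 := by rw [← hLapp]; exact hLp
        have hmem : ys₀ + t • p ∈ Dfeas m n Ahat chat 0 := by
          constructor
          · show Ahat.transpose.mulVec (ys₀.1 + t • p.1) + (ys₀.2 + t • p.2) = chat + 0
            rw [Matrix.mulVec_add, Matrix.mulVec_smul]
            have : Ahat.transpose.mulVec ys₀.1 + ys₀.2 = chat + 0 := hys₀.1
            have hsum : Ahat.transpose.mulVec p.1 + p.2 = 0 := hLp'
            calc Ahat.transpose.mulVec ys₀.1 + t • Ahat.transpose.mulVec p.1 +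
                  (ys₀.2 + t • p.2)
                = (Ahat.transpose.mulVec ys₀.1 + ys₀.2) +
                  t • (Ahat.transpose.mulVec p.1 + p.2) := by
                  rw [smul_add]; abel
              _ = chat + 0 := by rw [this, hsum, smul_zero, add_zero]
          · show (0 : Fin n → ℝ) ≤ ys₀.2 + t • p.2
            exact add_nonneg hys₀.2 (smul_nonneg htnn hpK)
        have hRm := hR _ hmem
        have htx : ‖t • p‖ = R + ‖ys₀‖ + 1 := by
          rw [norm_smul, Real.norm_eq_abs, abs_of_nonneg htnn, ht,
            div_mul_cancel₀ _ hnp.ne']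
        have h2 : ‖t • p‖ ≤ ‖ys₀ + t • p‖ + ‖ys₀‖ := by
          calc ‖t • p‖ = ‖ys₀ + t • p - ys₀‖ := by rw [add_sub_cancel_left]
            _ ≤ ‖ys₀ + t • p‖ + ‖ys₀‖ := norm_sub_le _ _
        linarith
      obtain ⟨δ, hδpos, hδ⟩ := coercive L K hKclosed hKcone h0
      refine ⟨-((m:ℝ) * ((‖chat‖ + C) / δ) * (‖bhat‖ + C)), ?_⟩
      rintro ⟨b, c⟩ hbc x hx
      obtain ⟨ys, hys⟩ := hbc.2.2
      have hysK : ys ∈ K := hys.2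
      have hLys : ‖L ys‖ = ‖chat + c‖ := by rw [hLapp, hys.1]
      have hysb : δ * ‖ys‖ ≤ ‖chat + c‖ := hLys ▸ hδ ys hysK
      have hcn : ‖chat + c‖ ≤ ‖chat‖ + C :=
        (norm_add_le _ _).trans (by linarith [hC2 _ hbc.1])
      have hysn : ‖ys‖ ≤ (‖chat‖ + C) / δ := by
        rw [le_div_iff₀ hδpos]; nlinarith
      have hy1 : ‖ys.1‖ ≤ (‖chat‖ + C) / δ := (norm_fst_le ys).trans hysn
      have hb : ‖bhat + b‖ ≤ ‖bhat‖ + C :=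
        (norm_add_le _ _).trans (by linarith [hC1 _ hbc.1])
      have hwd := weak_dual hx hys
      have hdl := dot_lower ys.1 (bhat + b)
      rw [Fintype.card_fin] at hdl
      have hmul : ‖ys.1‖ * ‖bhat + b‖ ≤ ((‖chat‖ + C) / δ) * (‖bhat‖ + C) :=
        mul_le_mul hy1 hb (norm_nonneg _) (by positivity)
      nlinarith [norm_nonneg ys.1, norm_nonneg (bhat + b), Nat.cast_nonneg (α := ℝ) m]
  obtain ⟨lo, hlo⟩ := main
  have hUbar0 : ((0,0) : (Fin m → ℝ) × (Fin n → ℝ)) ∈ Ubar m n Ahat bhat chat U :=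
    ⟨hU0, hP0, hD0⟩
  refine ⟨⟨(0,0), hUbar0⟩, ?_, ?_⟩
  · -- each value is finite
    intro bc hbc
    obtain ⟨x₀, hx₀⟩ := hbc.2.1
    obtain ⟨ys, hys⟩ := hbc.2.2
    have hub : pval m n Ahat bhat bc.1 chat bc.2 ≤ (((chat + bc.2) ⬝ᵥ x₀ : ℝ) : EReal) :=
      sInf_le ⟨x₀, hx₀, rfl⟩
    have hlb : ((ys.1 ⬝ᵥ (bhat + bc.1) : ℝ) : EReal) ≤ pval m n Ahat bhat bc.1 chat bc.2 := by
      apply le_sInf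
      rintro _ ⟨x, hxP, rfl⟩
      exact EReal.coe_le_coe_iff.mpr (weak_dual hxP hys)
    have hnb : pval m n Ahat bhat bc.1 chat bc.2 ≠ ⊥ :=
      ((EReal.bot_lt_coe _).trans_le hlb).ne'
    have hnt : pval m n Ahat bhat bc.1 chat bc.2 ≠ ⊤ :=
      (hub.trans_lt (EReal.coe_lt_top _)).ne
    exact ⟨(pval m n Ahat bhat bc.1 chat bc.2).toReal, (EReal.coe_toReal hnt hnb).symm⟩
  · -- uniform lower bound on the infimum
    refine lt_of_lt_of_le (EReal.bot_lt_coe lo) (le_sInf ?_)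
    rintro _ ⟨bc, hbc, rfl⟩
    apply le_sInf
    rintro _ ⟨x, hxP, rfl⟩
    exact EReal.coe_le_coe_iff.mpr (hlo bc hbc x hxP)
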